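/- Lower bound for discrepancy with respect to a density: for every s ≥ 2 there is a constant c_s > 0 such that for every N and every N-point set P_N in [0,1]^s there exists a convex set J ⊆ [0,1]^s with |(1/N)∑_{n=0}^{N−1} 1_J(x_n) − λ(J)| ≥ c_s·N^{−2/(s+1)}. -/

import Mathlib

open MeasureTheory Set
open scoped ENNReal

/-- The unit cube `[0,1]^s`. -/
def unitCube (s : ℕ) : Set (Fin s → ℝ) := Set.univ.pi fun _ => Set.Icc (0 : ℝ) 1

namespace Schmidt

variable {d : ℕ}

def tl (y : Fin (d+2) → ℝ) : Fin (d+1) → ℝ := fun j => y j.succ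

noncomputable def al (d : ℕ) : ℝ := ((d:ℝ)+1)⁻¹

lemma al_pos : 0 < al d := by rw [al]; positivity

def sq (p u : Fin (d+1) → ℝ) : ℝ := ∑ j, (u j - p j)^2

lemma sq_nonneg' (p u : Fin (d+1) → ℝ) : 0 ≤ sq p u :=
  Finset.sum_nonneg fun j _ => _root_.sq_nonneg _

lemma le_sq (p u : Fin (d+1) → ℝ) (j : Fin (d+1)) : (u j - p j)^2 ≤ sq p u :=
  Finset.single_le_sum (fun i _ => _root_.sq_nonneg ((u i - p i))) (Finset.mem_univ j)

noncomputable def ff (u : Fin (d+1) → ℝ) : ℝ := 1 - al d * sq (fun _ => 1/2) u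

noncomputable def TT (h : ℝ) (p u : Fin (d+1) → ℝ) : ℝ :=
  ff p - 2 * al d * (∑ j, (p j - 1/2) * (u j - p j)) - h

lemma ff_sub_TT (h : ℝ) (p u : Fin (d+1) → ℝ) :
    ff u - TT h p u = h - al d * sq p u := by
  have h1 : ∑ j, (u j - 1/2)^2
      = ∑ j, (p j - 1/2)^2 + 2 * ∑ j, (p j - 1/2) * (u j - p j) + ∑ j, (u j - p j)^2 := by
    rw [Finset.mul_sum, ← Finset.sum_add_distrib, ← Finset.sum_add_distrib]
    exact Finset.sum_congr rfl fun j _ => by ring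
  simp only [ff, TT, sq]
  linear_combination (-(al d)) * h1

lemma ff_le_one (u : Fin (d+1) → ℝ) : ff u ≤ 1 := by
  have h1 := sq_nonneg' (fun _ => (1:ℝ)/2) u
  have h2 := al_pos (d := d)
  unfold ff; nlinarith

lemma ff_ge (u : Fin (d+1) → ℝ) (hu : ∀ j, u j ∈ Icc (0:ℝ) 1) : 3/4 ≤ ff u := by
  have hq : sq (fun _ => (1:ℝ)/2) u ≤ ((d:ℝ)+1)/4 := by
    have h0 : ∀ j ∈ Finset.univ, (u j - 1/2)^2 ≤ 1/4 := by
      intro j _; have := (hu j).1; have := (hu j).2; nlinarith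
    calc sq (fun _ => (1:ℝ)/2) u ≤ ∑ _j : Fin (d+1), (1:ℝ)/4 :=
          Finset.sum_le_sum h0
      _ = ((d:ℝ)+1)/4 := by simp; ring
  have hal : al d * sq (fun _ => (1:ℝ)/2) u ≤ 1/4 := by
    rw [al]
    have h1 : (0:ℝ) < (d:ℝ)+1 := by positivity
    rw [inv_mul_le_iff₀ h1]
    linarith
  have := sq_nonneg' (fun _ => (1:ℝ)/2) u
  unfold ff; linarith

lemma TT_affine (h : ℝ) (p u u' : Fin (d+1) → ℝ) {a b : ℝ} (hab : a + b = 1) :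
    TT h p (fun j => a * u j + b * u' j) = a * TT h p u + b * TT h p u' := by
  have hS : ∑ j, (p j - 1/2) * ((a * u j + b * u' j) - p j)
      = a * ∑ j, (p j - 1/2) * (u j - p j) + b * ∑ j, (p j - 1/2) * (u' j - p j) := by
    rw [Finset.mul_sum, Finset.mul_sum, ← Finset.sum_add_distrib]
    refine Finset.sum_congr rfl fun j _ => ?_
    linear_combination ((p j - 1/2) * (p j)) * hab
  simp only [TT]
  rw [hS]
  linear_combination (-(ff p - h)) * hab

lemma ff_concave (u u' : Fin (d+1) → ℝ) {a b : ℝ} (ha : 0 ≤ a) (hb : 0 ≤ b) (hab : a + b = 1) :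
    a * ff u + b * ff u' ≤ ff (fun j => a * u j + b * u' j) := by
  obtain rfl : b = 1 - a := by linarith
  have hS : ∑ j, ((a * u j + (1-a) * u' j) - 1/2)^2
      ≤ a * ∑ j, (u j - 1/2)^2 + (1-a) * ∑ j, (u' j - 1/2)^2 := by
    rw [Finset.mul_sum, Finset.mul_sum, ← Finset.sum_add_distrib]
    refine Finset.sum_le_sum fun j _ => ?_
    nlinarith [mul_nonneg (mul_nonneg ha hb) (_root_.sq_nonneg (u j - u' j))]
  have h2 := al_pos (d := d)
  have h3 := mul_le_mul_of_nonneg_left hS h2.le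
  simp only [ff, sq]
  nlinarith [h3]

/-- the convex body -/
noncomputable def KK (d : ℕ) : Set (Fin (d+2) → ℝ) :=
  {y | y ∈ unitCube (d+2) ∧ y 0 ≤ ff (tl y)}

/-- halfspace below the tangent cut -/
noncomputable def HS (d : ℕ) (h : ℝ) (p : Fin (d+1) → ℝ) : Set (Fin (d+2) → ℝ) :=
  {y | y 0 ≤ TT h p (tl y)}

/-- a cap -/
noncomputable def cap (d : ℕ) (h : ℝ) (p : Fin (d+1) → ℝ) : Set (Fin (d+2) → ℝ) :=
  {y | y ∈ KK d ∧ TT h p (tl y) < y 0}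

lemma convex_unitCube (s : ℕ) : Convex ℝ (unitCube s) :=
  convex_pi fun _ _ => convex_Icc 0 1

lemma tl_combo (y y' : Fin (d+2) → ℝ) (a b : ℝ) :
    tl (a • y + b • y') = fun j => a * tl y j + b * tl y' j := by
  funext j; simp [tl]

lemma convex_KK : Convex ℝ (KK d) := by
  intro y hy y' hy' a b ha hb hab
  refine ⟨convex_unitCube (d+2) hy.1 hy'.1 ha hb hab, ?_⟩
  have h0 : (a • y + b • y') 0 = a * y 0 + b * y' 0 := by simp
  rw [h0, tl_combo]
  calc a * y 0 + b * y' 0 ≤ a * ff (tl y) + b * ff (tl y') := by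
        have := hy.2; have := hy'.2
        gcongr <;> assumption
    _ ≤ _ := ff_concave _ _ ha hb hab

lemma convex_HS (h : ℝ) (p : Fin (d+1) → ℝ) : Convex ℝ (HS d h p) := by
  intro y hy y' hy' a b ha hb hab
  simp only [HS, mem_setOf_eq] at *
  have h0 : (a • y + b • y') 0 = a * y 0 + b * y' 0 := by simp
  rw [h0, tl_combo, TT_affine _ _ _ _ hab]
  gcongr <;> assumption

lemma isClosed_unitCube (s : ℕ) : IsClosed (unitCube s) :=
  isClosed_set_pi fun _ _ => isClosed_Icc

lemma continuous_sq (p : Fin (d+1) → ℝ) : Continuous (sq p) := by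
  unfold sq
  exact continuous_finset_sum _ fun j _ =>
    ((continuous_apply j).sub continuous_const).pow 2

lemma continuous_ff : Continuous (ff (d := d)) := by
  unfold ff
  exact continuous_const.sub (continuous_const.mul (continuous_sq _))

lemma continuous_TT (h : ℝ) (p : Fin (d+1) → ℝ) : Continuous (TT h p) := by
  unfold TT
  refine (continuous_const.sub (continuous_const.mul ?_)).sub continuous_const
  exact continuous_finset_sum _ fun j _ =>
    continuous_const.mul ((continuous_apply j).sub continuous_const)

lemma continuous_tl : Continuous (tl (d := d)) :=
  continuous_pi fun j => continuous_apply _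

lemma measurableSet_KK : MeasurableSet (KK d) := by
  refine (IsClosed.measurableSet ?_)
  exact (isClosed_unitCube (d+2)).inter
    (isClosed_le (continuous_apply 0) (continuous_ff.comp continuous_tl))

lemma measurableSet_HS (h : ℝ) (p : Fin (d+1) → ℝ) : MeasurableSet (HS d h p) :=
  (isClosed_le (continuous_apply 0) ((continuous_TT h p).comp continuous_tl)).measurableSet

lemma measurableSet_cap (h : ℝ) (p : Fin (d+1) → ℝ) : MeasurableSet (cap d h p) := by
  have : cap d h p = KK d ∩ {y | TT h p (tl y) < y 0} := rfl
  rw [this]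
  exact measurableSet_KK.inter
    ((isOpen_lt ((continuous_TT h p).comp continuous_tl) (continuous_apply 0)).measurableSet)

lemma vol_slice (P : ℝ → (Fin (d+1) → ℝ) → Prop)
    (hm : MeasurableSet {z : (Fin (d+1) → ℝ) × ℝ | P z.2 z.1}) :
    volume {y : Fin (d+2) → ℝ | P (y 0) (tl y)}
      = ∫⁻ u, volume {t | P t u} := by
  set T : Set ((Fin (d+1) → ℝ) × ℝ) := {z | P z.2 z.1} with hT
  have hψ := MeasureTheory.volume_preserving_piFinSuccAbove
    (fun _ : Fin (d+2) => ℝ) 0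
  have hswap2 : MeasurePreserving (Prod.swap)
      (volume : Measure (ℝ × (Fin (d+1) → ℝ)))
      ((volume : Measure (Fin (d+1) → ℝ)).prod (volume : Measure ℝ)) := by
    rw [Measure.volume_eq_prod]; exact Measure.measurePreserving_swap
  have hψ' := hswap2.comp hψ
  have hset : {y : Fin (d+2) → ℝ | P (y 0) (tl y)}
      = (Prod.swap ∘ (MeasurableEquiv.piFinSuccAbove (fun _ : Fin (d+2) => ℝ) 0)) ⁻¹' T := by
    ext y
    have happ : ((MeasurableEquiv.piFinSuccAbove (fun _ : Fin (d+2) => ℝ) 0) y) =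
        (y 0, tl y) := by
      rfl
    simp only [mem_setOf_eq, mem_preimage, Function.comp_apply, happ, Prod.swap_prod_mk, hT]
  rw [hset, hψ'.measure_preimage hm.nullMeasurableSet, Measure.prod_apply hm]
  rfl


lemma al_le_one : al d ≤ 1 := by
  rw [al]
  have h1 : (1:ℝ) ≤ (d:ℝ)+1 := by
    have := Nat.cast_nonneg (α := ℝ) d; linarith
  exact inv_le_one_of_one_le₀ h1

noncomputable def Gam (d : ℕ) (r : ℝ) : ℝ≥0∞ :=
  ∫⁻ u : Fin (d+1) → ℝ, ENNReal.ofReal (al d * r^2 - al d * sq 0 u)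

lemma cap_slice_vol {r : ℝ} (hr0 : 0 < r) (hr : r ≤ 1/8)
    {p : Fin (d+1) → ℝ} (hp : ∀ j, p j ∈ Icc (1/4 : ℝ) (3/4)) :
    volume (cap d (al d * r^2) p)
      = ∫⁻ u, ENNReal.ofReal (al d * r^2 - al d * sq p u) := by
  have hal := al_pos (d := d)
  have hal1 := al_le_one (d := d)
  have hh : al d * r^2 ≤ 1/64 := by nlinarith
  have hcap : cap d (al d * r^2) p = {y : Fin (d+2) → ℝ |
      ((y 0 ∈ Icc (0:ℝ) 1 ∧ (∀ j, tl y j ∈ Icc (0:ℝ) 1)) ∧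
        y 0 ≤ ff (tl y) ∧ TT (al d * r^2) p (tl y) < y 0)} := by
    ext y
    simp only [cap, KK, unitCube, mem_setOf_eq, Set.mem_univ_pi]
    rw [Fin.forall_fin_succ (P := fun i => y i ∈ Icc (0:ℝ) 1)]
    tauto
  rw [hcap,
    vol_slice (fun t u => (t ∈ Icc (0:ℝ) 1 ∧ (∀ j, u j ∈ Icc (0:ℝ) 1)) ∧
      t ≤ ff u ∧ TT (al d * r^2) p u < t) ?meas]
  case meas =>
    have e : {z : (Fin (d+1) → ℝ) × ℝ |
        (z.2 ∈ Icc (0:ℝ) 1 ∧ (∀ j, z.1 j ∈ Icc (0:ℝ) 1)) ∧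
          z.2 ≤ ff z.1 ∧ TT (al d * r^2) p z.1 < z.2}
        = ((Prod.snd ⁻¹' Icc (0:ℝ) 1) ∩ (Prod.fst ⁻¹' (Set.univ.pi fun _ => Icc (0:ℝ) 1))) ∩
          ({z : (Fin (d+1) → ℝ) × ℝ | z.2 ≤ ff z.1} ∩
            {z : (Fin (d+1) → ℝ) × ℝ | TT (al d * r^2) p z.1 < z.2}) := by
      ext z
      simp only [mem_inter_iff, mem_preimage, mem_setOf_eq, Set.mem_univ_pi]
    rw [e]
    refine (((measurableSet_Icc).preimage measurable_snd).inter
      ((MeasurableSet.univ_pi fun _ => measurableSet_Icc).preimage measurable_fst)).inter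
      (MeasurableSet.inter ?_ ?_)
    · exact (isClosed_le continuous_snd (continuous_ff.comp continuous_fst)).measurableSet
    · exact (isOpen_lt ((continuous_TT _ p).comp continuous_fst) continuous_snd).measurableSet
  refine lintegral_congr fun u => ?_
  have hTT := ff_sub_TT (al d * r^2) p u
  by_cases hu : ∀ j, u j ∈ Icc (0:ℝ) 1
  · have hkey : {t : ℝ | (t ∈ Icc (0:ℝ) 1 ∧ (∀ j, u j ∈ Icc (0:ℝ) 1)) ∧
        t ≤ ff u ∧ TT (al d * r^2) p u < t} = Ioc (TT (al d * r^2) p u) (ff u) := by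
      ext t
      simp only [mem_setOf_eq, mem_Ioc, mem_Icc]
      constructor
      · rintro ⟨_, ht1, ht2⟩; exact ⟨ht2, ht1⟩
      · rintro ⟨ht2, ht1⟩
        have hlt : TT (al d * r^2) p u < ff u := lt_of_lt_of_le ht2 ht1
        have hffge := ff_ge u hu
        have hs := sq_nonneg' p u
        have hTge : 0 ≤ TT (al d * r^2) p u := by nlinarith
        exact ⟨⟨⟨hTge.trans ht2.le, ht1.trans (ff_le_one u)⟩, hu⟩, ht1, ht2⟩
    rw [hkey, Real.volume_Ioc]
    exact congrArg ENNReal.ofReal hTT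
  · have h1 : {t : ℝ | (t ∈ Icc (0:ℝ) 1 ∧ (∀ j, u j ∈ Icc (0:ℝ) 1)) ∧
        t ≤ ff u ∧ TT (al d * r^2) p u < t} = ∅ := by
      ext t; simp only [mem_setOf_eq, mem_empty_iff_false, iff_false]
      rintro ⟨⟨_, hu'⟩, _⟩; exact hu hu'
    rw [h1, measure_empty]
    symm
    rw [ENNReal.ofReal_eq_zero]
    push_neg at hu
    obtain ⟨j, hj⟩ := hu
    simp only [mem_Icc, not_and_or, not_le] at hj
    have hpj := hp j
    have hj2 : (1/4:ℝ)^2 ≤ (u j - p j)^2 := by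
      rcases hj with hj | hj
      · nlinarith [hpj.1, hpj.2]
      · nlinarith [hpj.1, hpj.2]
    have hle := le_sq p u j
    nlinarith [mul_le_mul_of_nonneg_left (hj2.trans hle) hal.le,
      mul_le_mul_of_nonneg_left (show r^2 ≤ (1/4:ℝ)^2 by nlinarith) hal.le]

lemma vol_cap_eq_Gam {r : ℝ} (hr0 : 0 < r) (hr : r ≤ 1/8)
    {p : Fin (d+1) → ℝ} (hp : ∀ j, p j ∈ Icc (1/4 : ℝ) (3/4)) :
    volume (cap d (al d * r^2) p) = Gam d r := by
  rw [cap_slice_vol hr0 hr hp]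
  have hsq : ∀ u : Fin (d+1) → ℝ, sq 0 (u + (-p)) = sq p u := by
    intro u
    unfold sq
    refine Finset.sum_congr rfl fun j _ => ?_
    simp only [Pi.add_apply, Pi.neg_apply, Pi.zero_apply]
    ring
  have he : (fun u => ENNReal.ofReal (al d * r^2 - al d * sq p u))
      = fun u => (fun w => ENNReal.ofReal (al d * r^2 - al d * sq 0 w)) (u + (-p)) := by
    funext u
    simp only [hsq]
  rw [he, lintegral_add_right_eq_self (fun w => ENNReal.ofReal (al d * r^2 - al d * sq 0 w)) (-p)]
  rfl


lemma measurable_gfun (c : ℝ) :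
    Measurable fun u : Fin (d+1) → ℝ => ENNReal.ofReal (c - al d * sq 0 u) :=
  ENNReal.measurable_ofReal.comp
    ((continuous_const.sub (continuous_const.mul (continuous_sq 0))).measurable)

lemma sq_smul (r : ℝ) (a : Fin (d+1) → ℝ) : sq 0 (r • a) = r^2 * sq 0 a := by
  unfold sq
  rw [Finset.mul_sum]
  refine Finset.sum_congr rfl fun j _ => ?_
  simp only [Pi.smul_apply, smul_eq_mul, Pi.zero_apply]
  ring

lemma Gam_scale {r : ℝ} (hr0 : 0 < r) :
    Gam d r = ENNReal.ofReal (r^(d+3)) * Gam d 1 := by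
  have hal := al_pos (d := d)
  have hfr : Module.finrank ℝ (Fin (d+1) → ℝ) = d+1 := by
    simp [Module.finrank_fintype_fun_eq_card]
  have hmap := Measure.map_addHaar_smul (volume : Measure (Fin (d+1) → ℝ)) hr0.ne'
  rw [hfr] at hmap
  have h1 : ∫⁻ a : Fin (d+1) → ℝ,
      (fun u => ENNReal.ofReal (al d * r^2 - al d * sq 0 u)) (r • a)
      = ENNReal.ofReal |((r^(d+1) : ℝ))⁻¹| * Gam d r := by
    rw [← lintegral_map (measurable_gfun _) (measurable_const_smul r), hmap,
      lintegral_smul_measure]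
    rfl
  have h2 : ∫⁻ a : Fin (d+1) → ℝ,
      (fun u => ENNReal.ofReal (al d * r^2 - al d * sq 0 u)) (r • a)
      = ENNReal.ofReal (r^2) * Gam d 1 := by
    have hpt : ∀ a : Fin (d+1) → ℝ,
        (fun u => ENNReal.ofReal (al d * r^2 - al d * sq 0 u)) (r • a)
          = ENNReal.ofReal (r^2) * ENNReal.ofReal (al d * 1^2 - al d * sq 0 a) := by
      intro a
      show ENNReal.ofReal (al d * r^2 - al d * sq 0 (r • a))
        = ENNReal.ofReal (r^2) * ENNReal.ofReal (al d * 1^2 - al d * sq 0 a)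
      rw [sq_smul, ← ENNReal.ofReal_mul (by positivity : (0:ℝ) ≤ r^2)]
      congr 1
      ring
    simp only [hpt]
    rw [lintegral_const_mul' _ _ ENNReal.ofReal_ne_top]
    rfl
  have heq := h2.symm.trans h1
  have hBpos : (0:ℝ) < r^(d+1) := by positivity
  rw [abs_of_pos (by positivity), ENNReal.ofReal_inv_of_pos hBpos] at heq
  set B := ENNReal.ofReal (r^(d+1)) with hB
  have hB0 : B ≠ 0 := by
    rw [hB]; simp [ENNReal.ofReal_eq_zero]; linarith
  have hBtop : B ≠ ⊤ := ENNReal.ofReal_ne_top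
  calc Gam d r = (B * B⁻¹) * Gam d r := by
        rw [ENNReal.mul_inv_cancel hB0 hBtop, one_mul]
    _ = B * (B⁻¹ * Gam d r) := by rw [mul_assoc]
    _ = B * (ENNReal.ofReal (r^2) * Gam d 1) := by rw [← heq]
    _ = (B * ENNReal.ofReal (r^2)) * Gam d 1 := by rw [mul_assoc]
    _ = ENNReal.ofReal (r^(d+3)) * Gam d 1 := by
        rw [hB, ← ENNReal.ofReal_mul (le_of_lt hBpos)]
        congr 1
        ring

lemma Gam_one_lt_top : Gam d 1 < ⊤ := by
  have hal := al_pos (d := d)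
  have hbound : Gam d 1 ≤ ∫⁻ u : Fin (d+1) → ℝ,
      (Set.univ.pi fun _ : Fin (d+1) => Icc (-1:ℝ) 1).indicator
        (fun _ => ENNReal.ofReal (al d)) u := by
    refine lintegral_mono fun u => ?_
    by_cases hu : u ∈ Set.univ.pi fun _ : Fin (d+1) => Icc (-1:ℝ) 1
    · rw [indicator_of_mem hu]
      refine ENNReal.ofReal_le_ofReal ?_
      have := sq_nonneg' 0 u
      nlinarith
    · rw [indicator_of_notMem hu]
      have hz : al d * 1^2 - al d * sq 0 u ≤ 0 := by
        rw [Set.mem_univ_pi] at hu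
        push_neg at hu
        obtain ⟨j, hj⟩ := hu
        simp only [mem_Icc, not_and_or, not_le] at hj
        have h1 : (1:ℝ) < (u j - 0)^2 := by
          rcases hj with hj | hj <;> nlinarith
        have h2 := le_sq 0 u j
        simp only [Pi.zero_apply] at h2
        have h3 : (1:ℝ) ≤ sq 0 u := le_of_lt (lt_of_lt_of_le h1 h2)
        nlinarith [mul_le_mul_of_nonneg_left h3 hal.le]
      exact le_of_eq (ENNReal.ofReal_eq_zero.2 hz)
  have : (∫⁻ u : Fin (d+1) → ℝ,
      (Set.univ.pi fun _ : Fin (d+1) => Icc (-1:ℝ) 1).indicator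
        (fun _ => ENNReal.ofReal (al d)) u) < ⊤ := by
    rw [lintegral_indicator (MeasurableSet.univ_pi fun _ => measurableSet_Icc),
      setLIntegral_const]
    refine ENNReal.mul_lt_top ENNReal.ofReal_lt_top ?_
    rw [volume_pi_pi]
    refine ENNReal.prod_lt_top fun j _ => ?_
    rw [Real.volume_Icc]
    exact ENNReal.ofReal_lt_top
  exact lt_of_le_of_lt hbound this

lemma Gam_one_pos : 0 < Gam d 1 := by
  have hal := al_pos (d := d)
  set a : ℝ := 1/(2*((d:ℝ)+1)) with ha
  have ha0 : 0 < a := by rw [ha]; positivity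
  have hbound : (∫⁻ u : Fin (d+1) → ℝ,
      (Set.univ.pi fun _ : Fin (d+1) => Icc (-a) a).indicator
        (fun _ => ENNReal.ofReal (al d * (1/2))) u) ≤ Gam d 1 := by
    refine lintegral_mono fun u => ?_
    by_cases hu : u ∈ Set.univ.pi fun _ : Fin (d+1) => Icc (-a) a
    · rw [indicator_of_mem hu]
      refine ENNReal.ofReal_le_ofReal ?_
      rw [Set.mem_univ_pi] at hu
      have hsq : sq 0 u ≤ ((d:ℝ)+1) * a^2 := by
        unfold sq
        calc ∑ j, (u j - 0)^2 ≤ ∑ _j : Fin (d+1), a^2 := by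
              refine Finset.sum_le_sum fun j _ => ?_
              have := (hu j).1; have := (hu j).2
              nlinarith
          _ = ((d:ℝ)+1) * a^2 := by
              rw [Finset.sum_const, Finset.card_univ, Fintype.card_fin, nsmul_eq_mul]
              push_cast; ring
      have haa : ((d:ℝ)+1) * a^2 ≤ 1/2 := by
        have hd1 : (0:ℝ) < (d:ℝ)+1 := by positivity
        have he : ((d:ℝ)+1) * (1/(2*((d:ℝ)+1)))^2 = 1/(4*((d:ℝ)+1)) := by
          field_simp; ring
        rw [ha, he]
        have h2 : (2:ℝ) ≤ 4*((d:ℝ)+1) := by nlinarith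
        exact one_div_le_one_div_of_le (by norm_num) h2
      nlinarith [mul_le_mul_of_nonneg_left (hsq.trans haa) hal.le]
    · rw [indicator_of_notMem hu]
      exact zero_le
  refine lt_of_lt_of_le ?_ hbound
  rw [lintegral_indicator (MeasurableSet.univ_pi fun _ => measurableSet_Icc),
    setLIntegral_const, volume_pi_pi]
  refine ENNReal.mul_pos ?_ ?_
  · simp only [ne_eq, ENNReal.ofReal_eq_zero, not_le]
    positivity
  · rw [Finset.prod_ne_zero_iff]
    intro j _
    rw [Real.volume_Icc]
    simp only [ne_eq, ENNReal.ofReal_eq_zero, not_le]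
    linarith


/-! ### The grid of cap centers -/

noncomputable def grid (d m : ℕ) (r : ℝ) (k : Fin (d+1) → Fin m) : Fin (d+1) → ℝ :=
  fun j => 1/4 + r + 2*r*((k j : ℕ) : ℝ)

lemma grid_mem {m : ℕ} {r : ℝ} (hr0 : 0 < r) (hm : (m:ℝ) ≤ 1/(4*r))
    (k : Fin (d+1) → Fin m) (j : Fin (d+1)) :
    grid d m r k j ∈ Icc (1/4:ℝ) (3/4) := by
  have hkj : ((k j : ℕ) : ℝ) ≤ (m:ℝ) - 1 := by
    have h1 : (k j : ℕ) + 1 ≤ m := (k j).isLt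
    have h2 : ((k j : ℕ) : ℝ) + 1 ≤ (m:ℝ) := by exact_mod_cast h1
    linarith
  have hrm : 2*r*(m:ℝ) ≤ 1/2 := by
    have h3 := mul_le_mul_of_nonneg_left hm (le_of_lt (by positivity : (0:ℝ) < 2*r))
    have h4 : 2*r*(1/(4*r)) = 1/2 := by field_simp; ring
    linarith
  constructor
  · have : 0 ≤ 2*r*((k j : ℕ) : ℝ) := by positivity
    unfold grid; linarith
  · unfold grid
    have h2 : 2*r*((k j : ℕ):ℝ) ≤ 2*r*((m:ℝ)-1) :=
      mul_le_mul_of_nonneg_left hkj (by positivity)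
    nlinarith

lemma grid_sep {m : ℕ} {r : ℝ} (hr0 : 0 < r) {k k' : Fin (d+1) → Fin m}
    (hkk : k ≠ k') : ∃ j, 2*r ≤ |grid d m r k j - grid d m r k' j| := by
  have : ∃ j, k j ≠ k' j := by
    by_contra hc; push_neg at hc; exact hkk (funext hc)
  obtain ⟨j, hj⟩ := this
  refine ⟨j, ?_⟩
  have hdiff : grid d m r k j - grid d m r k' j
      = 2*r*(((k j : ℕ) : ℝ) - ((k' j : ℕ) : ℝ)) := by
    unfold grid; ring
  rw [hdiff, abs_mul, abs_of_pos (by positivity : (0:ℝ) < 2*r)]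
  have h1 : (1:ℝ) ≤ |((k j : ℕ) : ℝ) - ((k' j : ℕ) : ℝ)| := by
    have hne : ((k j : ℕ) : ℝ) ≠ ((k' j : ℕ) : ℝ) := by
      intro hc
      exact hj (Fin.ext (by exact_mod_cast hc))
    have : ((k j : ℕ) : ℝ) - ((k' j : ℕ) : ℝ) ≠ 0 := sub_ne_zero.2 hne
    have hint : ∃ z : ℤ, ((k j : ℕ) : ℝ) - ((k' j : ℕ) : ℝ) = (z:ℝ) :=
      ⟨(k j : ℕ) - (k' j : ℕ), by push_cast; ring⟩
    obtain ⟨z, hz⟩ := hint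
    rw [hz] at this ⊢
    have hz0 : z ≠ 0 := by exact_mod_cast this
    have : (1:ℤ) ≤ |z| := Int.one_le_abs hz0
    calc (1:ℝ) ≤ (|z| : ℤ) := by exact_mod_cast this
      _ = |(z:ℝ)| := by push_cast; ring
  nlinarith [mul_le_mul_of_nonneg_left h1 (le_of_lt (by positivity : (0:ℝ) < 2*r))]

/-- a point of a cap is (Euclidean-)within `r` of the center -/
lemma mem_cap_sq {r : ℝ} {p : Fin (d+1) → ℝ} {y : Fin (d+2) → ℝ}
    (hy : y ∈ cap d (al d * r^2) p) : sq p (tl y) < r^2 := by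
  obtain ⟨⟨_, hy2⟩, hy3⟩ := hy
  have h1 : 0 < ff (tl y) - TT (al d * r^2) p (tl y) := by linarith
  rw [ff_sub_TT] at h1
  have hal := al_pos (d := d)
  by_contra hc
  push_neg at hc
  nlinarith [mul_le_mul_of_nonneg_left hc hal.le]

lemma cap_disjoint {m : ℕ} {r : ℝ} (hr0 : 0 < r) {k k' : Fin (d+1) → Fin m}
    (hkk : k ≠ k') :
    Disjoint (cap d (al d * r^2) (grid d m r k)) (cap d (al d * r^2) (grid d m r k')) := by
  rw [Set.disjoint_left]
  intro y hy hy'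
  obtain ⟨j, hj⟩ := grid_sep (d := d) hr0 hkk
  have h1 := mem_cap_sq hy
  have h2 := mem_cap_sq hy'
  have h3 := le_sq (grid d m r k) (tl y) j
  have h4 := le_sq (grid d m r k') (tl y) j
  set x := tl y j - grid d m r k j with hx
  set x' := tl y j - grid d m r k' j with hx'
  have hA : grid d m r k j - grid d m r k' j = x' - x := by rw [hx, hx']; ring
  rw [hA] at hj
  have h5 : (2*r)^2 ≤ (x' - x)^2 := by
    have := pow_le_pow_left₀ (by positivity : (0:ℝ) ≤ 2*r) hj 2
    rwa [sq_abs] at this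
  nlinarith [sq_nonneg (x + x')]

/-- points of a cap lie below other tangent planes -/
lemma cap_subset_HS {m : ℕ} {r : ℝ} (hr0 : 0 < r) {k k' : Fin (d+1) → Fin m}
    (hkk : k ≠ k') :
    cap d (al d * r^2) (grid d m r k) ⊆ HS d (al d * r^2) (grid d m r k') := by
  intro y hy
  have h1 := mem_cap_sq hy
  obtain ⟨j, hj⟩ := grid_sep (d := d) hr0 hkk
  have h3 := le_sq (grid d m r k) (tl y) j
  set x := tl y j - grid d m r k j with hx
  set x' := tl y j - grid d m r k' j with hx'
  have hA : grid d m r k j - grid d m r k' j = x' - x := by rw [hx, hx']; ring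
  rw [hA] at hj
  have h5 : (2*r)^2 ≤ (x' - x)^2 := by
    have := pow_le_pow_left₀ (by positivity : (0:ℝ) ≤ 2*r) hj 2
    rwa [sq_abs] at this
  have hxr : x^2 < r^2 := lt_of_le_of_lt h3 h1
  have h6 : r^2 ≤ x'^2 := by
    rcases le_abs.mp hj with hc | hc
    · -- 2r ≤ x' - x
      have hxgt : -r < x := by nlinarith
      have : r < x' := by linarith
      nlinarith
    · -- 2r ≤ -(x' - x) i.e. x' ≤ x - 2r
      have hxlt : x < r := by nlinarith
      have : x' < -r := by linarith
      nlinarith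
  have h7 : r^2 ≤ sq (grid d m r k') (tl y) := by
    have := le_sq (grid d m r k') (tl y) j
    exact h6.trans this
  have hal := al_pos (d := d)
  have h8 : ff (tl y) - TT (al d * r^2) (grid d m r k') (tl y) ≤ 0 := by
    rw [ff_sub_TT]
    nlinarith [mul_le_mul_of_nonneg_left h7 hal.le]
  have h9 := hy.1.2
  show y 0 ≤ TT (al d * r^2) (grid d m r k') (tl y)
  linarith


lemma volume_unitCube (s : ℕ) : volume (unitCube s) = 1 := by
  rw [unitCube, volume_pi_pi]
  simp [Real.volume_Icc]

lemma Gam_ne_top {r : ℝ} (hr0 : 0 < r) : Gam d r ≠ ⊤ := by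
  rw [Gam_scale hr0]
  exact ENNReal.mul_ne_top ENNReal.ofReal_ne_top Gam_one_lt_top.ne

lemma KK_subset_cube : KK d ⊆ unitCube (d+2) := fun y hy => hy.1

lemma key (m N : ℕ) {r : ℝ} (hr0 : 0 < r) (hr : r ≤ 1/8) (hm : (m:ℝ) ≤ 1/(4*r))
    (hNv : (N:ℝ) * (Gam d r).toReal ≤ 1/2)
    (x : Fin N → (Fin (d+2) → ℝ)) :
    ∃ J : Set (Fin (d+2) → ℝ), Convex ℝ J ∧ J ⊆ unitCube (d+2) ∧
      ((m:ℝ)^(d+1) * ((N:ℝ) * (Gam d r).toReal)) / 4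
        ≤ |(∑ n, Set.indicator J (fun _ => (1:ℝ)) (x n)) - (N:ℝ) * (volume J).toReal| := by
  classical
  set h : ℝ := al d * r^2 with hh
  set P : (Fin (d+1) → Fin m) → (Fin (d+1) → ℝ) := grid d m r with hP
  set v : ℝ := (Gam d r).toReal with hv
  have hvnn : 0 ≤ v := ENNReal.toReal_nonneg
  have hvcap : ∀ k, volume (cap d h (P k)) = Gam d r := fun k =>
    vol_cap_eq_Gam hr0 hr (grid_mem hr0 hm k)
  -- the intermediate convex sets
  set JJ : Finset ((Fin (d+1) → Fin m)) → Set (Fin (d+2) → ℝ) := fun S =>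
    KK d ∩ ⋂ k, ⋂ (_ : k ∉ S), HS d h (P k) with hJJ
  have hmemJJ : ∀ S y, y ∈ JJ S ↔ (y ∈ KK d ∧ ∀ k, k ∉ S → y ∈ HS d h (P k)) := by
    intro S y
    simp only [hJJ, mem_inter_iff, mem_iInter]
  have hJJconv : ∀ S, Convex ℝ (JJ S) := fun S =>
    convex_KK.inter (convex_iInter fun k => convex_iInter fun _ => convex_HS _ _)
  have hJJcube : ∀ S, JJ S ⊆ unitCube (d+2) := fun S =>
    fun y hy => KK_subset_cube hy.1
  have hJJmeas : ∀ S, MeasurableSet (JJ S) := fun S =>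
    measurableSet_KK.inter (MeasurableSet.iInter fun k =>
      MeasurableSet.iInter fun _ => measurableSet_HS _ _)
  have hJJfin : ∀ S, volume (JJ S) ≠ ⊤ := by
    intro S
    have h1 : volume (JJ S) ≤ 1 := by
      rw [← volume_unitCube (d+2)]
      exact measure_mono (hJJcube S)
    exact (lt_of_le_of_lt h1 ENNReal.one_lt_top).ne
  -- basic disjointness
  have hdisj1 : ∀ S k, Disjoint (JJ S) (cap d h (P k)) ∨ k ∈ S := by
    intro S k
    by_cases hk : k ∈ S
    · exact Or.inr hk
    · left
      rw [Set.disjoint_left]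
      intro y hy hy'
      have := ((hmemJJ S y).1 hy).2 k hk
      exact absurd hy'.2 (not_lt.2 this)
  have hdisj0 : ∀ k, Disjoint (JJ ∅) (cap d h (P k)) := by
    intro k
    rcases hdisj1 ∅ k with hd | hd
    · exact hd
    · exact absurd hd (Finset.notMem_empty k)
  have hsub0 : ∀ S, JJ ∅ ⊆ JJ S := by
    intro S y hy
    rw [hmemJJ] at hy ⊢
    exact ⟨hy.1, fun k _ => hy.2 k (Finset.notMem_empty k)⟩
  have hcapsub : ∀ S k, k ∈ S → cap d h (P k) ⊆ JJ S := by
    intro S k hk y hy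
    rw [hmemJJ]
    refine ⟨hy.1, fun k' hk' => ?_⟩
    have hne : k ≠ k' := fun hc => hk' (hc ▸ hk)
    exact cap_subset_HS hr0 hne hy
  -- decomposition
  have hdecomp : ∀ S, JJ S = JJ ∅ ∪ ⋃ k ∈ S, cap d h (P k) := by
    intro S
    apply Subset.antisymm
    · intro y hy
      rw [hmemJJ] at hy
      by_cases hall : ∀ k, y 0 ≤ TT h (P k) (tl y)
      · left
        rw [hmemJJ]
        exact ⟨hy.1, fun k _ => hall k⟩
      · push_neg at hall
        obtain ⟨k, hk⟩ := hall
        right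
        have hkS : k ∈ S := by
          by_contra hc
          exact absurd (hy.2 k hc) (not_le.2 hk)
        exact mem_biUnion hkS ⟨hy.1, hk⟩
    · refine union_subset (hsub0 S) ?_
      refine iUnion₂_subset fun k hk => hcapsub S k hk
  -- volume identity
  have hvolJJ : ∀ S : Finset ((Fin (d+1) → Fin m)),
      (volume (JJ S)).toReal = (volume (JJ ∅)).toReal + (S.card : ℝ) * v := by
    intro S
    rw [hdecomp S]
    rw [measure_union ?hd ?hmeas]
    case hd =>
      rw [Set.disjoint_iUnion₂_right]
      exact fun k _ => hdisj0 k
    case hmeas =>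
      exact MeasurableSet.biUnion S.countable_toSet fun k _ => measurableSet_cap _ _
    rw [measure_biUnion_finset ?hpd (fun k _ => measurableSet_cap _ _)]
    case hpd =>
      intro k _ k' _ hkk
      exact cap_disjoint hr0 hkk
    have hsum : ∑ k ∈ S, volume (cap d h (P k)) = S.card • Gam d r := by
      rw [Finset.sum_congr rfl fun k _ => hvcap k, Finset.sum_const]
    rw [hsum, ENNReal.toReal_add (hJJfin ∅) ?fin2]
    case fin2 =>
      simp only [nsmul_eq_mul]
      exact ENNReal.mul_ne_top (by simp) (Gam_ne_top hr0)
    congr 1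
    simp only [nsmul_eq_mul, ENNReal.toReal_mul, ENNReal.toReal_natCast]
    rw [hv]
  -- counting identity
  set cnt : Set (Fin (d+2) → ℝ) → ℝ := fun J => ∑ n, Set.indicator J (fun _ => (1:ℝ)) (x n)
    with hcntdef
  have hpt : ∀ (S : Finset ((Fin (d+1) → Fin m))) (y : Fin (d+2) → ℝ),
      Set.indicator (JJ S) (fun _ => (1:ℝ)) y
        = Set.indicator (JJ ∅) (fun _ => (1:ℝ)) y
          + ∑ k ∈ S, Set.indicator (cap d h (P k)) (fun _ => (1:ℝ)) y := by
    intro S y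
    by_cases hy0 : y ∈ JJ ∅
    · rw [indicator_of_mem hy0, indicator_of_mem (hsub0 S hy0)]
      have : ∀ k ∈ S, Set.indicator (cap d h (P k)) (fun _ => (1:ℝ)) y = 0 := by
        intro k _
        refine indicator_of_notMem ?_ _
        exact fun hc => (hdisj0 k).ne_of_mem hy0 hc rfl
      rw [Finset.sum_congr rfl this, Finset.sum_const, smul_zero, add_zero]
    · by_cases hy1 : ∃ k ∈ S, y ∈ cap d h (P k)
      · obtain ⟨k0, hk0S, hk0⟩ := hy1
        rw [indicator_of_mem (hcapsub S k0 hk0S hk0), indicator_of_notMem hy0, zero_add]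
        rw [Finset.sum_eq_single_of_mem k0 hk0S ?other]
        · rw [indicator_of_mem hk0]
        case other =>
          intro k hk hkk
          refine indicator_of_notMem ?_ _
          intro hc
          exact (cap_disjoint (d := d) hr0 hkk).ne_of_mem hc hk0 rfl
      · push_neg at hy1
        have hyS : y ∉ JJ S := by
          intro hc
          rw [hdecomp S] at hc
          rcases hc with hc | hc
          · exact hy0 hc
          · obtain ⟨k, hk⟩ := mem_iUnion.1 hc
            obtain ⟨hkS, hky⟩ := by
              simpa using hk
            exact hy1 k hkS hky
        rw [indicator_of_notMem hyS, indicator_of_notMem hy0, zero_add]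
        symm
        refine Finset.sum_eq_zero fun k hk => indicator_of_notMem (hy1 k hk) _
  have hcnt : ∀ S : Finset ((Fin (d+1) → Fin m)),
      cnt (JJ S) = cnt (JJ ∅) + ∑ k ∈ S, cnt (cap d h (P k)) := by
    intro S
    simp only [hcntdef]
    rw [Finset.sum_congr rfl fun n _ => hpt S (x n), Finset.sum_add_distrib]
    congr 1
    rw [Finset.sum_comm]
  -- the local discrepancy
  set del : Finset ((Fin (d+1) → Fin m)) → ℝ := fun S =>
    cnt (JJ S) - (N:ℝ) * (volume (JJ S)).toReal with hdel
  have hdelS : ∀ S : Finset ((Fin (d+1) → Fin m)),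
      del S = del ∅ + (∑ k ∈ S, cnt (cap d h (P k)) - (S.card : ℝ) * ((N:ℝ) * v)) := by
    intro S
    simp only [hdel]
    rw [hcnt S, hvolJJ S]
    ring
  -- caps with points / without
  set Spos : Finset ((Fin (d+1) → Fin m)) :=
    Finset.univ.filter (fun k => ∃ n, x n ∈ cap d h (P k)) with hSpos
  have hck1 : ∀ k ∈ Spos, (1:ℝ) ≤ cnt (cap d h (P k)) := by
    intro k hk
    rw [hSpos, Finset.mem_filter] at hk
    obtain ⟨n, hn⟩ := hk.2
    have : Set.indicator (cap d h (P k)) (fun _ => (1:ℝ)) (x n) = 1 := indicator_of_mem hn _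
    calc (1:ℝ) = Set.indicator (cap d h (P k)) (fun _ => (1:ℝ)) (x n) := this.symm
      _ ≤ cnt (cap d h (P k)) :=
          Finset.single_le_sum (f := fun n => Set.indicator (cap d h (P k)) (fun _ => (1:ℝ)) (x n))
            (fun i _ => indicator_nonneg (fun _ _ => zero_le_one) _) (Finset.mem_univ n)
  have hck0 : ∀ k, k ∉ Spos → cnt (cap d h (P k)) = 0 := by
    intro k hk
    rw [hSpos, Finset.mem_filter] at hk
    push_neg at hk
    have hnk : ∀ n, x n ∉ cap d h (P k) := hk (Finset.mem_univ k)
    exact Finset.sum_eq_zero fun n _ => indicator_of_notMem (hnk n) _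
  -- the two difference bounds
  have hNvnn : 0 ≤ (N:ℝ) * v := by positivity
  have hA : (Spos.card : ℝ) * ((N:ℝ) * v) ≤ del Spos - del ∅ := by
    rw [hdelS Spos]
    have h1 : ∀ k ∈ Spos, 2 * ((N:ℝ) * v) ≤ cnt (cap d h (P k)) := by
      intro k hk
      have := hck1 k hk
      linarith [hNv]
    have h2 := Finset.card_nsmul_le_sum Spos _ _ h1
    rw [nsmul_eq_mul] at h2
    linarith
  have hB : del Finset.univ - del Spos
      = -(((Finset.univ \ Spos).card : ℝ) * ((N:ℝ) * v)) := by
    have hsplit : ∑ k ∈ Finset.univ, cnt (cap d h (P k))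
        = ∑ k ∈ Spos, cnt (cap d h (P k)) + ∑ k ∈ Finset.univ \ Spos, cnt (cap d h (P k)) := by
      rw [← Finset.sum_sdiff (Finset.subset_univ Spos)]
      ring
    have hzero : ∑ k ∈ Finset.univ \ Spos, cnt (cap d h (P k)) = 0 := by
      refine Finset.sum_eq_zero fun k hk => ?_
      rw [Finset.mem_sdiff] at hk
      exact hck0 k hk.2
    have hcard : ((Finset.univ : Finset ((Fin (d+1) → Fin m))).card : ℝ)
        = (Spos.card : ℝ) + ((Finset.univ \ Spos).card : ℝ) := by
      have h9 : (Finset.univ \ Spos).card = Finset.univ.card - Spos.card :=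
        Finset.card_sdiff_of_subset (Finset.subset_univ Spos)
      have h10 := Finset.card_le_card (Finset.subset_univ Spos)
      rw [h9]
      push_cast [Nat.cast_sub h10]
      ring
    rw [hdelS Finset.univ, hdelS Spos, hsplit, hzero, add_zero]
    linear_combination (-((N:ℝ) * v)) * hcard
  -- total count
  have hM : ((Finset.univ : Finset ((Fin (d+1) → Fin m))).card : ℝ) = (m:ℝ)^(d+1) := by
    rw [Finset.card_univ]
    have : Fintype.card ((Fin (d+1) → Fin m)) = m^(d+1) := by
      simp [Fintype.card_fun]
    rw [this]
    push_cast
    ring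
  have hcards : (Spos.card : ℝ) + ((Finset.univ \ Spos).card : ℝ) = (m:ℝ)^(d+1) := by
    have h9 : (Finset.univ \ Spos).card = Finset.univ.card - Spos.card :=
      Finset.card_sdiff_of_subset (Finset.subset_univ Spos)
    have h10 := Finset.card_le_card (Finset.subset_univ (s := Spos))
    rw [← hM, h9]
    push_cast [Nat.cast_sub h10]
    ring
  -- triangle inequalities
  have htri1 : (Spos.card : ℝ) * ((N:ℝ)*v) ≤ |del Spos| + |del ∅| := by
    have := le_abs_self (del Spos)
    have := neg_abs_le (del ∅)
    linarith
  have htri2 : (((Finset.univ \ Spos).card : ℝ)) * ((N:ℝ)*v) ≤ |del Finset.univ| + |del Spos| := by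
    have h1 : del Spos - del Finset.univ
        = ((Finset.univ \ Spos).card : ℝ) * ((N:ℝ) * v) := by linarith [hB]
    have := le_abs_self (del Spos)
    have := neg_abs_le (del Finset.univ)
    linarith
  -- selection among the three candidate sets
  by_cases c1 : ((m:ℝ)^(d+1) * ((N:ℝ) * v)) / 4 ≤ |del Spos|
  · exact ⟨JJ Spos, hJJconv _, hJJcube _, c1⟩
  by_cases c2 : ((m:ℝ)^(d+1) * ((N:ℝ) * v)) / 4 ≤ |del ∅|
  · exact ⟨JJ ∅, hJJconv _, hJJcube _, c2⟩
  by_cases c3 : ((m:ℝ)^(d+1) * ((N:ℝ) * v)) / 4 ≤ |del Finset.univ|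
  · exact ⟨JJ Finset.univ, hJJconv _, hJJcube _, c3⟩
  exfalso
  push_neg at c1 c2 c3
  have hmul : ((Spos.card : ℝ) + ((Finset.univ \ Spos).card : ℝ)) * ((N:ℝ)*v)
      = (m:ℝ)^(d+1) * ((N:ℝ)*v) := by rw [hcards]
  nlinarith [htri1, htri2, hmul, c1, c2, c3]


end Schmidt

set_option maxHeartbeats 2000000 in
open Schmidt in
theorem isotropic_discrepancy_lower_bound (s : ℕ) (hs : 2 ≤ s) :
    ∃ c : ℝ, 0 < c ∧ ∀ N : ℕ, 0 < N → ∀ x : Fin N → (Fin s → ℝ), (∀ n, x n ∈ unitCube s) →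
      ∃ J : Set (Fin s → ℝ), Convex ℝ J ∧ J ⊆ unitCube s ∧
        c * (N : ℝ) ^ (-(2 : ℝ) / ((s : ℝ) + 1))
          ≤ |(1 / (N : ℝ)) * ∑ n, Set.indicator J (fun _ => (1 : ℝ)) (x n)
              - (volume J).toReal| := by
  obtain ⟨d, rfl⟩ : ∃ d, s = d + 2 := ⟨s - 2, by omega⟩
  set γ : ℝ := (Gam d 1).toReal with hγ
  have hγpos : 0 < γ := ENNReal.toReal_pos Gam_one_pos.ne' Gam_one_lt_top.ne
  have he3 : (0:ℝ) < (d:ℝ)+3 := by positivity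
  set c1 : ℝ := γ * (2*γ)^(-(2:ℝ)/((d:ℝ)+3)) / (4 * 8^(d+1)) with hc1
  set c2 : ℝ := γ / (256 * 8^(d+1)) with hc2
  have hc1pos : 0 < c1 := by
    rw [hc1]
    have := Real.rpow_pos_of_pos (show (0:ℝ) < 2*γ by positivity) (-(2:ℝ)/((d:ℝ)+3))
    positivity
  have hc2pos : 0 < c2 := by rw [hc2]; positivity
  clear_value c2 c1 γ
  refine ⟨min c1 c2, lt_min hc1pos hc2pos, ?_⟩
  intro N hN x hx
  have hNpos : (0:ℝ) < N := Nat.cast_pos.2 hN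
  have hN1 : (1:ℝ) ≤ N := by exact_mod_cast hN
  set rN : ℝ := (2*(N:ℝ)*γ) ^ (-(1:ℝ)/((d:ℝ)+3)) with hrN
  have hbase : (0:ℝ) < 2*(N:ℝ)*γ := by positivity
  have hrNpos : 0 < rN := Real.rpow_pos_of_pos hbase _
  set r : ℝ := min rN (1/8) with hrdef
  have hr0 : 0 < r := lt_min hrNpos (by norm_num)
  have hrle : r ≤ 1/8 := min_le_right _ _
  have hrleN : r ≤ rN := min_le_left _ _
  set m : ℕ := ⌊1/(4*r)⌋₊ with hm
  have hmle : (m:ℝ) ≤ 1/(4*r) := Nat.floor_le (by positivity)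
  have hmge : 1/(8*r) ≤ (m:ℝ) := by
    have h1 : 1/(4*r) < (m:ℝ) + 1 := Nat.lt_floor_add_one _
    have h2 : (1:ℝ) ≤ 1/(8*r) := by
      rw [le_div_iff₀ (by positivity)]
      linarith
    have h3 : 1/(4*r) = 2 * (1/(8*r)) := by field_simp; ring
    linarith
  have hrNpow : rN^(d+3) = (2*(N:ℝ)*γ)⁻¹ := by
    rw [hrN, ← Real.rpow_natCast ((2*(N:ℝ)*γ) ^ (-(1:ℝ)/((d:ℝ)+3))) (d+3),
      ← Real.rpow_mul hbase.le]
    have he : (-(1:ℝ)/((d:ℝ)+3)) * (((d+3 : ℕ)):ℝ) = -1 := by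
      push_cast
      field_simp
    rw [he, Real.rpow_neg hbase.le, Real.rpow_one]
  clear_value m r rN
  have hv : (Gam d r).toReal = r^(d+3) * γ := by
    rw [Gam_scale hr0, ENNReal.toReal_mul, ENNReal.toReal_ofReal (by positivity), hγ]
  have hNv : (N:ℝ) * (Gam d r).toReal ≤ 1/2 := by
    rw [hv]
    have h1 : r^(d+3) ≤ rN^(d+3) := pow_le_pow_left₀ hr0.le hrleN _
    have h2 : (N:ℝ) * (rN^(d+3) * γ) = 1/2 := by
      rw [hrNpow]
      field_simp
    nlinarith [mul_le_mul_of_nonneg_left (mul_le_mul_of_nonneg_right h1 hγpos.le) hNpos.le]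
  obtain ⟨J, hJconv, hJcube, hJbound⟩ := key m N hr0 hrle hmle hNv x
  refine ⟨J, hJconv, hJcube, ?_⟩
  have habs : |(1 / (N : ℝ)) * ∑ n, Set.indicator J (fun _ => (1 : ℝ)) (x n)
      - (volume J).toReal|
      = (1/(N:ℝ)) * |(∑ n, Set.indicator J (fun _ => (1:ℝ)) (x n))
          - (N:ℝ) * (volume J).toReal| := by
    have hA : (1/(N:ℝ)) * ∑ n, Set.indicator J (fun _ => (1 : ℝ)) (x n)
        - (volume J).toReal
        = (1/(N:ℝ)) * ((∑ n, Set.indicator J (fun _ => (1:ℝ)) (x n))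
            - (N:ℝ) * (volume J).toReal) := by
      field_simp
    rw [hA, abs_mul, abs_of_pos (show (0:ℝ) < 1/(N:ℝ) by positivity)]
  rw [habs]
  -- main arithmetic bound
  have hmpow : (1/(8*r))^(d+1) ≤ (m:ℝ)^(d+1) := pow_le_pow_left₀ (by positivity) hmge _
  have hid : (1/(8*r))^(d+1) * (r^(d+3)*γ)/4 = γ * r^2/(4*8^(d+1)) := by
    have hr' : (r:ℝ) ≠ 0 := hr0.ne'
    rw [div_pow, one_pow, mul_pow, show d+3 = d+1+2 by omega, pow_add]
    field_simp
    ring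
  have hbb : γ * r^2/(4*8^(d+1)) ≤ (m:ℝ)^(d+1) * (Gam d r).toReal/4 := by
    rw [hv, ← hid]
    have := mul_le_mul_of_nonneg_right hmpow
      (show (0:ℝ) ≤ (r^(d+3)*γ)/4 by positivity)
    calc (1/(8*r))^(d+1) * (r^(d+3)*γ)/4
        = (1/(8*r))^(d+1) * ((r^(d+3)*γ)/4) := by ring
      _ ≤ (m:ℝ)^(d+1) * ((r^(d+3)*γ)/4) := this
      _ = (m:ℝ)^(d+1) * (r^(d+3)*γ)/4 := by ring
  have hcast : -(2:ℝ) / (((d+2 : ℕ) : ℝ) + 1) = -(2:ℝ)/((d:ℝ)+3) := by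
    push_cast
    ring_nf
  have hmain : min c1 c2 * (N:ℝ)^(-(2:ℝ)/((d:ℝ)+3)) ≤ γ * r^2/(4*8^(d+1)) := by
    rcases le_total rN (1/8) with hc | hc
    · have hreq : r = rN := hrdef.trans (min_eq_left hc)
      have hrsq : rN^2 = (N:ℝ)^(-(2:ℝ)/((d:ℝ)+3)) * (2*γ)^(-(2:ℝ)/((d:ℝ)+3)) := by
        rw [hrN, ← Real.rpow_natCast ((2*(N:ℝ)*γ) ^ (-(1:ℝ)/((d:ℝ)+3))) 2,
          ← Real.rpow_mul hbase.le]
        have he : (-(1:ℝ)/((d:ℝ)+3)) * ((2:ℕ):ℝ) = -(2:ℝ)/((d:ℝ)+3) := by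
          push_cast
          ring
        rw [he, show 2*(N:ℝ)*γ = (N:ℝ) * (2*γ) by ring,
          Real.mul_rpow hNpos.le (by positivity)]
      rw [hreq, hrsq]
      have h1 : min c1 c2 ≤ c1 := min_le_left _ _
      have h2 : γ * ((N:ℝ)^(-(2:ℝ)/((d:ℝ)+3)) * (2*γ)^(-(2:ℝ)/((d:ℝ)+3)))/(4*8^(d+1))
          = c1 * (N:ℝ)^(-(2:ℝ)/((d:ℝ)+3)) := by
        rw [hc1]
        ring
      rw [h2]
      have hNpow : (0:ℝ) < (N:ℝ)^(-(2:ℝ)/((d:ℝ)+3)) := Real.rpow_pos_of_pos hNpos _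
      nlinarith
    · have hreq : r = 1/8 := hrdef.trans (min_eq_right hc)
      have hexp : -(2:ℝ)/((d:ℝ)+3) ≤ 0 := by
        apply div_nonpos_of_nonpos_of_nonneg <;> [norm_num; positivity]
      have hNpow1 : (N:ℝ)^(-(2:ℝ)/((d:ℝ)+3)) ≤ 1 :=
        Real.rpow_le_one_of_one_le_of_nonpos hN1 hexp
      have hceq : γ * (1/8:ℝ)^2/(4*8^(d+1)) = c2 := by
        rw [hc2]; ring
      rw [hreq]
      calc min c1 c2 * (N:ℝ)^(-(2:ℝ)/((d:ℝ)+3))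
          ≤ min c1 c2 * 1 :=
            mul_le_mul_of_nonneg_left hNpow1 (le_of_lt (lt_min hc1pos hc2pos))
        _ = min c1 c2 := mul_one _
        _ ≤ c2 := min_le_right _ _
        _ = γ * (1/8:ℝ)^2/(4*8^(d+1)) := hceq.symm
  calc min c1 c2 * (N:ℝ)^(-(2:ℝ)/(((d+2:ℕ):ℝ)+1)) 
      = min c1 c2 * (N:ℝ)^(-(2:ℝ)/((d:ℝ)+3)) := by rw [hcast]
    _ ≤ γ * r^2/(4*8^(d+1)) := hmain
    _ ≤ (m:ℝ)^(d+1) * (Gam d r).toReal/4 := hbb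
    _ = ((m:ℝ)^(d+1) * ((N:ℝ) * (Gam d r).toReal))/4 * (1/(N:ℝ)) := by
        field_simp
    _ ≤ |(∑ n, Set.indicator J (fun _ => (1:ℝ)) (x n)) - (N:ℝ) * (volume J).toReal| * (1/(N:ℝ)) := by
        have h9 : (0:ℝ) ≤ 1/(N:ℝ) := by positivity
        exact mul_le_mul_of_nonneg_right hJbound h9
    _ = (1/(N:ℝ)) * |(∑ n, Set.indicator J (fun _ => (1:ℝ)) (x n)) - (N:ℝ) * (volume J).toReal| := by
        ring
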